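/- arXiv:2009.08763 — 2 statements merged into one kernel-verified Lean document; each statement's English description precedes it below -/
import Mathlib

section
/- Let R be a ring and (T, F) a torsion pair in Mod(R) with torsion radical t. Then the torsion submodule t(R) of the right regular module R equals the intersection K of the annihilators of all modules in F, as (two-sided) ideals of R. -/
/- STATEMENT 6: For a ring `R` and a torsion pair `(T, F)` in `Mod(R)` with torsion
radical `t`, the torsion submodule `t(R)` of the regular module equals the intersection
`K` of the annihilators of all modules in `F`. (Formalized with left modules.) -/

universe u

structure TorsionTheory (R : Type u) [Ring R] where
  torsion : ∀ (M : Type u) [AddCommGroup M] [Module R M], Prop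
  free : ∀ (M : Type u) [AddCommGroup M] [Module R M], Prop
  torsion_congr : ∀ {M N : Type u} [AddCommGroup M] [Module R M] [AddCommGroup N]
    [Module R N], (M ≃ₗ[R] N) → torsion M → torsion N
  free_congr : ∀ {M N : Type u} [AddCommGroup M] [Module R M] [AddCommGroup N]
    [Module R N], (M ≃ₗ[R] N) → free M → free N
  hom_eq_zero : ∀ {M N : Type u} [AddCommGroup M] [Module R M] [AddCommGroup N]
    [Module R N] (f : M →ₗ[R] N), torsion M → free N → f = 0
  rad : ∀ (M : Type u) [AddCommGroup M] [Module R M], Submodule R M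
  rad_torsion : ∀ (M : Type u) [AddCommGroup M] [Module R M], torsion (rad M)
  quotient_rad_free : ∀ (M : Type u) [AddCommGroup M] [Module R M], free (M ⧸ rad M)

theorem stmt6 (R : Type u) [Ring R] (tt : TorsionTheory R)
    (K : Ideal R)
    (hK : ∀ r : R, r ∈ K ↔
      ∀ (M : Type u) [AddCommGroup M] [Module R M], tt.free M → ∀ m : M, r • m = 0) :
    tt.rad R = K := by
  apply le_antisymm
  · intro r hr
    rw [hK]
    intro M _ _ hM m
    let f : (tt.rad R) →ₗ[R] M :=
      { toFun := fun x => (x : R) • m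
        map_add' := fun x y => by simp [add_smul]
        map_smul' := fun c x => by simp [mul_smul] }
    have h0 := tt.hom_eq_zero f (tt.rad_torsion R) hM
    have : f ⟨r, hr⟩ = 0 := by rw [h0]; rfl
    simpa [f] using this
  · intro r hr
    have h := (hK r).mp hr (R ⧸ tt.rad R) (tt.quotient_rad_free R)
      (Submodule.Quotient.mk (1 : R))
    rw [← Submodule.Quotient.mk_smul, Submodule.Quotient.mk_eq_zero] at h
    simpa using h
end

section
/- Let R be a ring and (T, F) a hereditary torsion pair in Mod(R) with torsion radical t. Suppose t(R) is finitely generated as a left R-module and its left annihilator equals its right annihilator. Then R/Ann(_R t(R)) is a torsion module, i.e. lies in T. -/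
/- STATEMENT 8: Let `(T, F)` be a hereditary torsion pair in `Mod(R)` with radical `t`.
If `t(R)` is finitely generated on the opposite side and its two annihilators coincide,
then `R / Ann(t(R))` is torsion. (Formalized with left modules, mirroring the paper's
right-module statement: `t(R)` f.g. as a right module, left annihilator = right
annihilator, and `R/A ∈ T` where `A = {r : x * r = 0 for all x ∈ t(R)}`.) -/

universe u

namespace Aux

variable {R : Type u} [Ring R] (tt : TorsionTheory R)

lemma torsion_of_rad_top {M : Type u} [AddCommGroup M] [Module R M]
    (h : tt.rad M = ⊤) : tt.torsion M :=
  tt.torsion_congr ((LinearEquiv.ofEq _ _ h).trans Submodule.topEquiv) (tt.rad_torsion M)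

lemma torsion_of_surjective {M N : Type u} [AddCommGroup M] [Module R M]
    [AddCommGroup N] [Module R N] (f : M →ₗ[R] N)
    (hf : Function.Surjective f) (hM : tt.torsion M) : tt.torsion N := by
  apply torsion_of_rad_top
  have h0 : (tt.rad N).mkQ.comp f = 0 := tt.hom_eq_zero _ hM (tt.quotient_rad_free N)
  ext y
  simp only [Submodule.mem_top, iff_true]
  obtain ⟨z, rfl⟩ := hf y
  have := LinearMap.congr_fun h0 z
  simpa [Submodule.Quotient.mk_eq_zero] using this

lemma torsion_of_injective (hered : ∀ (M : Type u) [AddCommGroup M] [Module R M] (N : Submodule R M),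
      tt.torsion M → tt.torsion N) {M N : Type u} [AddCommGroup M] [Module R M]
    [AddCommGroup N] [Module R N] (f : M →ₗ[R] N)
    (hf : Function.Injective f) (hN : tt.torsion N) : tt.torsion M :=
  tt.torsion_congr (LinearEquiv.ofInjective f hf).symm
    (hered N (LinearMap.range f) hN)

lemma torsion_ext {M : Type u} [AddCommGroup M] [Module R M] (N : Submodule R M)
    (hN : tt.torsion N) (hQ : tt.torsion (M ⧸ N)) : tt.torsion M := by
  set K := tt.rad M with hK
  have hNK : N ≤ K := by
    intro m hm
    have h0 : K.mkQ.comp N.subtype = 0 :=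
      tt.hom_eq_zero _ hN (tt.quotient_rad_free M)
    have := LinearMap.congr_fun h0 ⟨m, hm⟩
    simpa [Submodule.Quotient.mk_eq_zero] using this
  have hNK' : N ≤ K.comap (LinearMap.id (R := R) (M := M)) := hNK
  have hsurj : Function.Surjective (Submodule.mapQ N K LinearMap.id hNK') := by
    intro z
    obtain ⟨m, rfl⟩ := Submodule.Quotient.mk_surjective K z
    exact ⟨Submodule.Quotient.mk m, by simp [Submodule.mapQ_apply]⟩
  have hQK : tt.torsion (M ⧸ K) := torsion_of_surjective tt _ hsurj hQ
  have hid : (LinearMap.id : (M ⧸ K) →ₗ[R] (M ⧸ K)) = 0 :=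
    tt.hom_eq_zero _ hQK (tt.quotient_rad_free M)
  apply torsion_of_rad_top
  ext m
  simp only [Submodule.mem_top, iff_true]
  have := LinearMap.congr_fun hid (Submodule.Quotient.mk m)
  simpa [Submodule.Quotient.mk_eq_zero] using this

lemma torsion_of_ker_of_cod (hered : ∀ (M : Type u) [AddCommGroup M] [Module R M] (N : Submodule R M),
      tt.torsion M → tt.torsion N) {M N : Type u} [AddCommGroup M] [Module R M]
    [AddCommGroup N] [Module R N] (f : M →ₗ[R] N)
    (hker : tt.torsion (LinearMap.ker f)) (hN : tt.torsion N) : tt.torsion M := by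
  refine torsion_ext tt (LinearMap.ker f) hker ?_
  exact tt.torsion_congr f.quotKerEquivRange.symm (hered N (LinearMap.range f) hN)

lemma torsion_pi (hered : ∀ (M : Type u) [AddCommGroup M] [Module R M] (N : Submodule R M),
      tt.torsion M → tt.torsion N) {M : Type u} [AddCommGroup M] [Module R M] (hM : tt.torsion M) :
    ∀ n : ℕ, tt.torsion (Fin n → M) := by
  intro n
  induction n with
  | zero =>
    apply torsion_of_rad_top
    ext v
    have hv0 : v = 0 := funext fun i => i.elim0
    simp only [Submodule.mem_top, iff_true, hv0]
    exact Submodule.zero_mem _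
  | succ n ih =>
    refine torsion_of_ker_of_cod tt hered (LinearMap.funLeft R M Fin.succ) ?_ ih
    refine torsion_of_injective tt hered
      ((LinearMap.proj 0).comp (LinearMap.ker (LinearMap.funLeft R M Fin.succ)).subtype)
      ?_ hM
    rintro ⟨v, hv⟩ ⟨w, hw⟩ h
    simp only [LinearMap.mem_ker] at hv hw
    ext i
    refine Fin.cases ?_ ?_ i
    · simpa using h
    · intro j
      have hv' := congrFun hv j
      have hw' := congrFun hw j
      simp only [LinearMap.funLeft_apply, Pi.zero_apply] at hv' hw'
      simp [hv', hw']

end Aux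

theorem stmt8 (R : Type u) [Ring R] (tt : TorsionTheory R)
    (hered : ∀ (M : Type u) [AddCommGroup M] [Module R M] (N : Submodule R M),
      tt.torsion M → tt.torsion N)
    (hfg : ∃ (n : ℕ) (x : Fin n → R), (∀ i, x i ∈ tt.rad R) ∧
      ∀ y ∈ tt.rad R, ∃ c : Fin n → R, y = ∑ i, x i * c i)
    (A : Ideal R)
    (hA : ∀ r : R, r ∈ A ↔ ∀ x ∈ tt.rad R, x * r = 0)
    (hann : ∀ r : R, (∀ x ∈ tt.rad R, x * r = 0) ↔ (∀ x ∈ tt.rad R, r * x = 0)) :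
    tt.torsion (R ⧸ A) := by
  obtain ⟨n, x, hx, hgen⟩ := hfg
  set F : R →ₗ[R] (Fin n → ↥(tt.rad R)) :=
    LinearMap.pi (fun i => LinearMap.toSpanSingleton R _ (⟨x i, hx i⟩ : ↥(tt.rad R)))
    with hF
  have hker : A = LinearMap.ker F := by
    ext r
    have h1 : r ∈ A ↔ ∀ y ∈ tt.rad R, r * y = 0 := (hA r).trans (hann r)
    rw [h1, LinearMap.mem_ker]
    constructor
    · intro h
      ext i
      have := h (x i) (hx i)
      simpa [hF, LinearMap.toSpanSingleton_apply, Subtype.ext_iff, smul_eq_mul]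
        using this
    · intro h y hy
      obtain ⟨c, rfl⟩ := hgen y hy
      have hxi : ∀ i, r * x i = 0 := by
        intro i
        have := congrFun h i
        simpa [hF, LinearMap.toSpanSingleton_apply, Subtype.ext_iff, smul_eq_mul]
          using this
      rw [Finset.mul_sum]
      refine Finset.sum_eq_zero fun i _ => ?_
      rw [← mul_assoc, hxi i, zero_mul]
  have htor : tt.torsion (Fin n → ↥(tt.rad R)) :=
    Aux.torsion_pi tt hered (tt.rad_torsion R) n
  have hrange : tt.torsion (LinearMap.range F) := hered _ _ htor
  have h1 : tt.torsion (R ⧸ LinearMap.ker F) :=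
    tt.torsion_congr F.quotKerEquivRange.symm hrange
  exact tt.torsion_congr (Submodule.quotEquivOfEq _ _ hker.symm) h1
end
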